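/- Let n ≥ 2 and let f : ℝⁿ → ℝ be twice continuously differentiable. Define G(x, t) = ∫_{S^{n−1}} f(x + t θ) dσ(θ) for x ∈ ℝⁿ and t > 0. Then G satisfies the Euler–Poisson–Darboux equation: for every x ∈ ℝⁿ and t > 0, ∂²G/∂t² (x, t) + ((n − 1)/t) ∂G/∂t (x, t) = Δₓ G(x, t). -/

import Mathlib

open MeasureTheory Metric Real


/-- normalization map -/
noncomputable def nmap {m : ℕ} (x : EuclideanSpace ℝ (Fin m)) : EuclideanSpace ℝ (Fin m) :=
  ‖x‖⁻¹ • x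

lemma nmap_lip {m : ℕ} :
    LipschitzOnWith 2 (nmap (m := m)) {x | 1 ≤ ‖x‖} := by
  rw [lipschitzOnWith_iff_dist_le_mul]
  intro x hx y hy
  simp only [Set.mem_setOf_eq] at hx hy
  have hx0 : (0:ℝ) < ‖x‖ := lt_of_lt_of_le one_pos hx
  have hy0 : (0:ℝ) < ‖y‖ := lt_of_lt_of_le one_pos hy
  have key : nmap x - nmap y = ‖x‖⁻¹ • (x - y) + (‖x‖⁻¹ - ‖y‖⁻¹) • y := by
    simp [nmap, smul_sub, sub_smul]
  rw [dist_eq_norm, key]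
  have h1 : ‖‖x‖⁻¹ • (x - y)‖ ≤ ‖x - y‖ := by
    rw [norm_smul, norm_inv, norm_norm]
    calc ‖x‖⁻¹ * ‖x - y‖ ≤ 1 * ‖x - y‖ := by
          apply mul_le_mul_of_nonneg_right _ (norm_nonneg _)
          rw [inv_le_one_iff₀]; right; exact hx
      _ = ‖x - y‖ := one_mul _
  have h2 : ‖(‖x‖⁻¹ - ‖y‖⁻¹) • y‖ ≤ ‖x - y‖ := by
    rw [norm_smul, Real.norm_eq_abs]
    have hab : |‖y‖ - ‖x‖| ≤ ‖x - y‖ := by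
      rw [norm_sub_rev]; exact abs_norm_sub_norm_le y x
    rw [show ‖x‖⁻¹ - ‖y‖⁻¹ = (‖y‖ - ‖x‖) / (‖x‖ * ‖y‖) by field_simp]
    rw [abs_div, abs_of_pos (mul_pos hx0 hy0), div_mul_eq_mul_div,
      div_le_iff₀ (mul_pos hx0 hy0)]
    have h5 : |‖y‖ - ‖x‖| * ‖y‖ ≤ ‖x - y‖ * ‖y‖ :=
      mul_le_mul_of_nonneg_right hab hy0.le
    nlinarith [h5, mul_nonneg (norm_nonneg (x - y)) hy0.le,
      mul_le_mul_of_nonneg_left hx (mul_nonneg (norm_nonneg (x - y)) hy0.le)]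
  calc ‖‖x‖⁻¹ • (x - y) + (‖x‖⁻¹ - ‖y‖⁻¹) • y‖
      ≤ ‖‖x‖⁻¹ • (x - y)‖ + ‖(‖x‖⁻¹ - ‖y‖⁻¹) • y‖ := norm_add_le _ _
    _ ≤ ‖x - y‖ + ‖x - y‖ := add_le_add h1 h2
    _ = 2 * ‖x - y‖ := by ring
    _ = (2:NNReal) * dist x y := by rw [dist_eq_norm]; norm_num

/-- face embedding -/
noncomputable def fmap {m : ℕ} (i : Fin (m+1)) (c : ℝ) (y : Fin m → ℝ) :
    EuclideanSpace ℝ (Fin (m+1)) :=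
  (WithLp.equiv 2 _).symm (i.insertNth c y)

lemma fmap_apply_same {m : ℕ} (i : Fin (m+1)) (c : ℝ) (y : Fin m → ℝ) :
    fmap i c y i = c := by
  simp [fmap, Fin.insertNth_apply_same]

lemma fmap_apply_succAbove {m : ℕ} (i : Fin (m+1)) (c : ℝ) (y : Fin m → ℝ) (j : Fin m) :
    fmap i c y (i.succAbove j) = y j := by
  simp [fmap, Fin.insertNth_apply_succAbove]

lemma fmap_lip {m : ℕ} (i : Fin (m+1)) (c : ℝ) :
    LipschitzWith (Real.toNNReal (Real.sqrt m)) (fmap i c) := by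
  apply LipschitzWith.of_dist_le_mul
  intro y y'
  rw [EuclideanSpace.dist_eq]
  calc √(∑ k, dist (fmap i c y k) (fmap i c y' k) ^ 2)
      = √(∑ j, dist (y j) (y' j) ^ 2) := by
        rw [Fin.sum_univ_succAbove (fun k => dist (fmap i c y k) (fmap i c y' k) ^ 2) i]
        simp [fmap_apply_same, fmap_apply_succAbove]
    _ ≤ √(∑ _j : Fin m, dist y y' ^ 2) := by
        apply Real.sqrt_le_sqrt
        apply Finset.sum_le_sum
        intro j _
        have := dist_le_pi_dist y y' j
        nlinarith [@dist_nonneg _ _ (y j) (y' j), @dist_nonneg _ _ y y']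
    _ = √(m : ℝ) * dist y y' := by
        rw [Finset.sum_const]
        simp [Real.sqrt_mul (by positivity : (0:ℝ) ≤ (m:ℝ)), Real.sqrt_sq dist_nonneg]
    _ = (Real.toNNReal (Real.sqrt m) : ℝ) * dist y y' := by
        rw [Real.coe_toNNReal _ (Real.sqrt_nonneg _)]

lemma sphere_cover {m : ℕ} :
    sphere (0 : EuclideanSpace ℝ (Fin (m+1))) 1 ⊆
      ⋃ p : Fin (m+1) × Bool,
        nmap '' (fmap p.1 (if p.2 then 1 else -1) '' closedBall 0 1) := by
  intro θ hθ
  have hθn : ‖θ‖ = 1 := by simpa using hθ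
  obtain ⟨i, -, hi⟩ := Finset.exists_max_image Finset.univ (fun k => |θ k|)
    ⟨⟨0, Nat.succ_pos m⟩, Finset.mem_univ _⟩
  have hc0 : 0 < |θ i| := by
    rcases eq_or_lt_of_le (abs_nonneg (θ i)) with h | h
    · exfalso
      have hz : θ = 0 := by
        ext k
        have hk := hi k (Finset.mem_univ k)
        have : |θ k| ≤ 0 := by rw [h]; exact hk
        simpa [abs_nonpos_iff] using this
      rw [hz] at hθn; simp at hθn
    · exact h
  have hine : θ i ≠ 0 := fun h0 => by simp [h0] at hc0
  refine Set.mem_iUnion.2 ⟨(i, decide (0 ≤ θ i)), ?_⟩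
  set ε : ℝ := if decide (0 ≤ θ i) = true then (1:ℝ) else -1 with hε
  set y : Fin m → ℝ := fun j => |θ i|⁻¹ * θ (i.succAbove j) with hy
  have hBy : fmap i ε y = |θ i|⁻¹ • θ := by
    ext k
    refine Fin.succAboveCases (α := fun k => fmap i ε y k = (|θ i|⁻¹ • θ) k) i ?_ (fun j => ?_) k
    · show fmap i ε y i = (|θ i|⁻¹ • θ) i
      rw [fmap_apply_same]
      show ε = |θ i|⁻¹ * θ i
      by_cases h : 0 ≤ θ i
      · rw [hε, abs_of_nonneg h]; simp [h, hine]
      · rw [hε, abs_of_neg (not_le.1 h)]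
        simp only [decide_eq_true_eq, h, if_false]
        field_simp
    · show fmap i ε y (i.succAbove j) = (|θ i|⁻¹ • θ) (i.succAbove j)
      rw [fmap_apply_succAbove]
      rfl
  refine ⟨fmap i ε y, ⟨y, ?_, rfl⟩, ?_⟩
  · rw [mem_closedBall, dist_zero_right]
    apply pi_norm_le_iff_of_nonneg zero_le_one |>.2
    intro j
    rw [hy]
    simp only [norm_mul, norm_inv, Real.norm_eq_abs, abs_abs]
    rw [inv_mul_le_iff₀ hc0, mul_one]
    exact hi _ (Finset.mem_univ _)
  · rw [hBy]
    have h6 : ‖(|θ i|⁻¹ • θ : EuclideanSpace ℝ (Fin (m+1)))‖ = |θ i|⁻¹ := by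
      rw [norm_smul, hθn, mul_one, Real.norm_eq_abs, abs_inv, abs_abs]
    rw [nmap, h6, smul_smul, inv_inv, mul_inv_cancel₀ (abs_ne_zero.2 hine), one_smul]

lemma sphere_hausdorff_lt_top {m : ℕ} :
    μH[(m:ℝ)] (sphere (0 : EuclideanSpace ℝ (Fin (m+1))) 1) < ⊤ := by
  apply lt_of_le_of_lt (measure_mono (sphere_cover (m := m)))
  apply lt_of_le_of_lt (measure_iUnion_fintype_le _ _)
  apply ENNReal.sum_lt_top.2
  intro p _
  set e : ℝ := if p.2 then (1:ℝ) else -1 with he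
  have habs : |e| = 1 := by rcases hb : p.2 <;> simp [he, hb]
  have hface : fmap p.1 e '' closedBall 0 1 ⊆ {x | 1 ≤ ‖x‖} := by
    rintro _ ⟨y, -, rfl⟩
    show (1:ℝ) ≤ ‖fmap p.1 e y‖
    rw [EuclideanSpace.norm_eq]
    have h0 : e ^ 2 ≤ ∑ k, ‖fmap p.1 e y k‖ ^ 2 := by
      have hh : ‖fmap p.1 e y p.1‖ ^ 2 = e ^ 2 := by
        rw [fmap_apply_same]; simp [Real.norm_eq_abs, sq_abs]
      rw [← hh]
      exact Finset.single_le_sum (f := fun k => ‖fmap p.1 e y k‖ ^ 2)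
        (fun k _ => by positivity) (Finset.mem_univ p.1)
    calc (1:ℝ) = √(e ^ 2) := by rw [Real.sqrt_sq_eq_abs, habs]
      _ ≤ _ := Real.sqrt_le_sqrt h0
  have h1 : μH[(m:ℝ)] (nmap '' (fmap p.1 e '' closedBall 0 1)) ≤
      (2:NNReal) ^ (m:ℝ) * μH[(m:ℝ)] (fmap p.1 e '' closedBall 0 1) :=
    (nmap_lip.mono hface).hausdorffMeasure_image_le (by positivity)
  have h2 : μH[(m:ℝ)] (fmap p.1 e '' closedBall 0 1) ≤
      ((Real.toNNReal (Real.sqrt m) : NNReal) : ENNReal) ^ (m:ℝ) *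
        μH[(m:ℝ)] (closedBall (0 : Fin m → ℝ) 1) :=
    (fmap_lip p.1 e).hausdorffMeasure_image_le (by positivity) _
  have h3 : μH[(m:ℝ)] (closedBall (0 : Fin m → ℝ) 1) < ⊤ := by
    have hv : (μH[(m:ℝ)] : Measure (Fin m → ℝ)) = volume := by
      have := hausdorffMeasure_pi_real (ι := Fin m)
      simpa using this
    rw [hv]
    exact (isCompact_closedBall _ _).measure_lt_top
  calc μH[(m:ℝ)] (nmap '' (fmap p.1 e '' closedBall 0 1))
      ≤ (2:NNReal) ^ (m:ℝ) * (((Real.toNNReal (Real.sqrt m) : NNReal) : ENNReal) ^ (m:ℝ) *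
        μH[(m:ℝ)] (closedBall (0 : Fin m → ℝ) 1)) :=
        le_trans h1 (mul_le_mul_right h2 _)
    _ < ⊤ := by
        apply ENNReal.mul_lt_top
        · exact ENNReal.rpow_lt_top_of_nonneg (by positivity) (by simp)
        apply ENNReal.mul_lt_top
        · exact ENNReal.rpow_lt_top_of_nonneg (by positivity) (by simp)
        · exact h3

noncomputable def sphMeasure (n : ℕ) : Measure (EuclideanSpace ℝ (Fin n)) :=
  (μH[(n:ℝ)-1]).restrict (sphere 0 1)

lemma sphMeasure_finite {m : ℕ}
    (hlt : μH[(m:ℝ)] (sphere (0 : EuclideanSpace ℝ (Fin (m+1))) 1) < ⊤) :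
    IsFiniteMeasure (sphMeasure (m+1)) := by
  constructor
  rw [sphMeasure, Measure.restrict_apply_univ]
  have hc : ((m+1:ℕ):ℝ) - 1 = (m:ℝ) := by push_cast; ring
  rw [hc]
  exact hlt

lemma sphMeasure_ae_norm (n : ℕ) : ∀ᵐ θ ∂(sphMeasure n), ‖θ‖ = 1 := by
  have := ae_restrict_mem (μ := μH[(n:ℝ)-1])
    ((Metric.isClosed_sphere (x := (0 : EuclideanSpace ℝ (Fin n))) (ε := 1)).measurableSet)
  filter_upwards [this] with θ hθ
  simpa [mem_sphere_zero_iff_norm] using hθ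

lemma integrable_sph {n : ℕ} [IsFiniteMeasure (sphMeasure n)]
    (h : EuclideanSpace ℝ (Fin n) → ℝ) (hh : Continuous h) :
    Integrable h (sphMeasure n) := by
  obtain ⟨C, hC⟩ := (isCompact_closedBall (0 : EuclideanSpace ℝ (Fin n)) 1).exists_bound_of_continuousOn hh.continuousOn
  refine ⟨hh.aestronglyMeasurable, ?_⟩
  apply HasFiniteIntegral.of_bounded (C := C)
  filter_upwards [sphMeasure_ae_norm n] with θ hθ
  exact hC θ (by simp [mem_closedBall, dist_zero_right, hθ])

lemma hasDerivAt_integral_sph {n : ℕ} [IsFiniteMeasure (sphMeasure n)]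
    (F F' : ℝ → EuclideanSpace ℝ (Fin n) → ℝ)
    (hF : Continuous fun p : ℝ × EuclideanSpace ℝ (Fin n) => F p.1 p.2)
    (hF' : Continuous fun p : ℝ × EuclideanSpace ℝ (Fin n) => F' p.1 p.2)
    (hd : ∀ s θ, HasDerivAt (fun u => F u θ) (F' s θ) s) (s₀ : ℝ) :
    HasDerivAt (fun s => ∫ θ, F s θ ∂(sphMeasure n)) (∫ θ, F' s₀ θ ∂(sphMeasure n)) s₀ := by
  obtain ⟨C, hC⟩ := ((isCompact_Icc (a := s₀ - 1) (b := s₀ + 1)).prod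
    (isCompact_closedBall (0 : EuclideanSpace ℝ (Fin n)) 1)).exists_bound_of_continuousOn
    hF'.continuousOn
  refine (hasDerivAt_integral_of_dominated_loc_of_deriv_le (μ := sphMeasure n) (𝕜 := ℝ)
    (F := F) (F' := F') (x₀ := s₀) (bound := fun _ => C) (s := ball s₀ 1) (ball_mem_nhds s₀ one_pos)
    (Filter.Eventually.of_forall fun s1 => ?_)
    (integrable_sph _ (hF.comp (Continuous.prodMk_right s₀)))
    ((hF'.comp (Continuous.prodMk_right s₀)).aestronglyMeasurable)
    ?_ (integrable_const C)
    (Filter.Eventually.of_forall fun θ => fun s2 _ => hd s2 θ)).2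
  · exact (hF.comp (Continuous.prodMk_right s1)).aestronglyMeasurable
  · filter_upwards [sphMeasure_ae_norm n] with θ hθ
    intro s hs
    refine hC (s, θ) ⟨?_, by simp [mem_closedBall, dist_zero_right, hθ]⟩
    have : |s - s₀| < 1 := by simpa [Real.dist_eq] using hs
    constructor <;> [linarith [abs_lt.1 this |>.1]; linarith [abs_lt.1 this |>.2]]

variable {n : ℕ}

noncomputable def rotFun (i j : Fin n) (s : ℝ) (θ : EuclideanSpace ℝ (Fin n)) :
    EuclideanSpace ℝ (Fin n) :=
  (WithLp.equiv 2 _).symm (fun k =>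
    if k = i then cos s * θ i - sin s * θ j
    else if k = j then sin s * θ i + cos s * θ j
    else θ k)

lemma rotFun_apply (i j : Fin n) (s : ℝ) (θ : EuclideanSpace ℝ (Fin n)) (k : Fin n) :
    rotFun i j s θ k =
      if k = i then cos s * θ i - sin s * θ j
      else if k = j then sin s * θ i + cos s * θ j
      else θ k := rfl

lemma sum_split (i j : Fin n) (hij : i ≠ j) (g : Fin n → ℝ) :
    ∑ k, g k = g i + g j + ∑ k ∈ (Finset.univ.erase i).erase j, g k := by
  have h1 : ∑ k, g k = g i + ∑ k ∈ Finset.univ.erase i, g k :=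
    (Finset.add_sum_erase _ g (Finset.mem_univ i)).symm
  have h2 : ∑ k ∈ Finset.univ.erase i, g k = g j + ∑ k ∈ (Finset.univ.erase i).erase j, g k :=
    (Finset.add_sum_erase _ g (Finset.mem_erase.2 ⟨hij.symm, Finset.mem_univ j⟩)).symm
  rw [h1, h2]; ring

lemma rotFun_norm (i j : Fin n) (hij : i ≠ j) (s : ℝ) (θ : EuclideanSpace ℝ (Fin n)) :
    ‖rotFun i j s θ‖ = ‖θ‖ := by
  rw [EuclideanSpace.norm_eq, EuclideanSpace.norm_eq]
  congr 1
  rw [sum_split i j hij (fun k => ‖rotFun i j s θ k‖ ^ 2),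
    sum_split i j hij (fun k => ‖θ k‖ ^ 2)]
  have hrest : ∑ k ∈ (Finset.univ.erase i).erase j, ‖rotFun i j s θ k‖ ^ 2 =
      ∑ k ∈ (Finset.univ.erase i).erase j, ‖θ k‖ ^ 2 := by
    apply Finset.sum_congr rfl
    intro k hk
    have hk2 := Finset.mem_erase.1 hk
    have hkj := hk2.1
    have hki := (Finset.mem_erase.1 hk2.2).1
    rw [rotFun_apply, if_neg hki, if_neg hkj]
  rw [hrest]
  have hi' : rotFun i j s θ i = cos s * θ i - sin s * θ j := by
    rw [rotFun_apply, if_pos rfl]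
  have hj' : rotFun i j s θ j = sin s * θ i + cos s * θ j := by
    rw [rotFun_apply, if_neg hij.symm, if_pos rfl]
  simp only [hi', hj', Real.norm_eq_abs, sq_abs]
  linear_combination (θ i ^ 2 + θ j ^ 2) * sin_sq_add_cos_sq s

lemma rotFun_inv (i j : Fin n) (hij : i ≠ j) (s : ℝ) (θ : EuclideanSpace ℝ (Fin n)) :
    rotFun i j (-s) (rotFun i j s θ) = θ := by
  ext k
  have hi' : rotFun i j s θ i = cos s * θ i - sin s * θ j := by
    rw [rotFun_apply, if_pos rfl]
  have hj' : rotFun i j s θ j = sin s * θ i + cos s * θ j := by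
    rw [rotFun_apply, if_neg hij.symm, if_pos rfl]
  rw [rotFun_apply]
  split_ifs with h1 h2
  · subst h1
    rw [hi', hj', Real.cos_neg, Real.sin_neg]
    linear_combination θ k * sin_sq_add_cos_sq s
  · subst h2
    rw [hi', hj', Real.cos_neg, Real.sin_neg]
    linear_combination θ k * sin_sq_add_cos_sq s
  · rw [rotFun_apply, if_neg h1, if_neg h2]

noncomputable def rotLIE (i j : Fin n) (hij : i ≠ j) (s : ℝ) :
    EuclideanSpace ℝ (Fin n) ≃ₗᵢ[ℝ] EuclideanSpace ℝ (Fin n) where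
  toLinearEquiv :=
    { toFun := rotFun i j s
      map_add' := by
        intro θ θ'
        ext k
        simp only [rotFun, WithLp.equiv_symm_apply, PiLp.toLp_apply, PiLp.add_apply]
        split_ifs <;> ring
      map_smul' := by
        intro c θ
        ext k
        simp only [rotFun, WithLp.equiv_symm_apply, PiLp.toLp_apply, PiLp.smul_apply, smul_eq_mul,
          RingHom.id_apply]
        split_ifs <;> ring
      invFun := rotFun i j (-s)
      left_inv := rotFun_inv i j hij s
      right_inv := by
        intro θ
        have := rotFun_inv i j hij (-s) θ
        rwa [neg_neg] at this }
  norm_map' := rotFun_norm i j hij s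

lemma integral_rotFun {n : ℕ} (i j : Fin n) (hij : i ≠ j) (s : ℝ)
    (h : EuclideanSpace ℝ (Fin n) → ℝ) (hmeas : AEStronglyMeasurable h (sphMeasure n)) :
    ∫ θ, h (rotFun i j s θ) ∂(sphMeasure n) = ∫ θ, h θ ∂(sphMeasure n) := by
  set e := (rotLIE i j hij s).toIsometryEquiv with he
  have hpre : ⇑e ⁻¹' (sphere (0 : EuclideanSpace ℝ (Fin n)) 1) = sphere 0 1 := by
    ext θ
    simp only [Set.mem_preimage, mem_sphere_iff_norm, sub_zero]
    constructor
    · intro hh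
      rw [← rotFun_norm i j hij s θ]
      exact hh
    · intro hh
      show ‖rotFun i j s θ‖ = 1
      rw [rotFun_norm i j hij s θ]; exact hh
  have hmp : MeasurePreserving e (sphMeasure n) (sphMeasure n) := by
    have h0 := (e.measurePreserving_hausdorffMeasure ((n:ℝ)-1)).restrict_preimage
      (Metric.isClosed_sphere (x := (0 : EuclideanSpace ℝ (Fin n))) (ε := (1:ℝ))).measurableSet
    rw [hpre] at h0
    exact h0
  exact hmp.integral_comp e.toHomeomorph.measurableEmbedding h

variable {n : ℕ}

noncomputable def esingle (i : Fin n) : EuclideanSpace ℝ (Fin n) :=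
  EuclideanSpace.single i (1:ℝ)

noncomputable def Avec (i j : Fin n) (θ : EuclideanSpace ℝ (Fin n)) :
    EuclideanSpace ℝ (Fin n) := θ i • esingle i + θ j • esingle j

noncomputable def Bvec (i j : Fin n) (θ : EuclideanSpace ℝ (Fin n)) :
    EuclideanSpace ℝ (Fin n) := θ i • esingle j - θ j • esingle i

lemma sum_esingle (θ : EuclideanSpace ℝ (Fin n)) : ∑ i, θ i • esingle i = θ := by
  have h := (EuclideanSpace.basisFun (Fin n) ℝ).sum_repr θ
  simpa [esingle, EuclideanSpace.basisFun_repr, EuclideanSpace.basisFun_apply] using h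

lemma clm_expand (φ : EuclideanSpace ℝ (Fin n) →L[ℝ] ℝ) (θ : EuclideanSpace ℝ (Fin n)) :
    φ θ = ∑ i, θ i * φ (esingle i) := by
  conv_lhs => rw [← sum_esingle θ]
  rw [map_sum]
  exact Finset.sum_congr rfl fun i _ => by rw [_root_.map_smul, smul_eq_mul]

lemma clm2_expand (B2 : EuclideanSpace ℝ (Fin n) →L[ℝ] EuclideanSpace ℝ (Fin n) →L[ℝ] ℝ)
    (θ : EuclideanSpace ℝ (Fin n)) :
    (B2 θ) θ = ∑ i, ∑ j, θ i * θ j * (B2 (esingle i)) (esingle j) := by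
  have h1 : B2 θ = ∑ i, θ i • B2 (esingle i) := by
    conv_lhs => rw [← sum_esingle θ]
    rw [map_sum]
    exact Finset.sum_congr rfl fun i _ => by rw [_root_.map_smul]
  rw [h1, ContinuousLinearMap.sum_apply]
  refine Finset.sum_congr rfl fun i _ => ?_
  rw [ContinuousLinearMap.smul_apply, smul_eq_mul, clm_expand (B2 (esingle i)) θ,
    Finset.mul_sum]
  exact Finset.sum_congr rfl fun j _ => by ring

lemma offDiag_identity (t : ℝ)
    (B2 : EuclideanSpace ℝ (Fin n) →L[ℝ] EuclideanSpace ℝ (Fin n) →L[ℝ] ℝ)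
    (φ : EuclideanSpace ℝ (Fin n) →L[ℝ] ℝ) (θ : EuclideanSpace ℝ (Fin n))
    (hθ : ∑ i, θ i ^ 2 = 1) :
    ∑ p ∈ (Finset.univ : Finset (Fin n)).offDiag,
      ((B2 (t • Bvec p.1 p.2 θ)) (t • Bvec p.1 p.2 θ) + φ (-(t • Avec p.1 p.2 θ)))
    = 2 * t^2 * ((∑ i, (B2 (esingle i)) (esingle i)) - (B2 θ) θ)
        - 2*((n:ℝ)-1)*t* (φ θ) := by
  set β : Fin n → Fin n → ℝ := fun i j => (B2 (esingle i)) (esingle j) with hβ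
  set ψ : Fin n → ℝ := fun i => φ (esingle i) with hψ
  have hterm : ∀ i j : Fin n,
      (B2 (t • Bvec i j θ)) (t • Bvec i j θ) + φ (-(t • Avec i j θ)) =
      t^2*(θ i^2 * β j j) + t^2*(β i i * θ j^2) - t^2*(θ i * θ j * β j i)
        - t^2*(θ i * θ j * β i j) - t*(θ i * ψ i) - t*(θ j * ψ j) := by
    intro i j
    simp only [Avec, Bvec, _root_.map_smul, _root_.map_sub, _root_.map_add, _root_.map_neg,
      ContinuousLinearMap.smul_apply, ContinuousLinearMap.sub_apply,
      ContinuousLinearMap.add_apply, ContinuousLinearMap.neg_apply, smul_eq_mul, hβ, hψ]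
    ring
  have hsplit : ∀ g : Fin n × Fin n → ℝ,
      ∑ p ∈ (Finset.univ : Finset (Fin n)).offDiag, g p =
        (∑ i, ∑ j, g (i,j)) - ∑ i, g (i,i) := by
    intro g
    have h2 := Finset.sum_union (f := g)
      (Finset.disjoint_diag_offDiag (Finset.univ : Finset (Fin n)))
    rw [Finset.diag_union_offDiag, Finset.sum_product, Finset.sum_diag] at h2
    linarith [h2]
  have hfact : ∀ (c : ℝ) (u v : Fin n → ℝ),
      ∑ i, ∑ j, c * (u i * v j) = c * ((∑ i, u i) * (∑ j, v j)) := by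
    intro c u v
    rw [Finset.sum_mul_sum, Finset.mul_sum]
    exact Finset.sum_congr rfl fun i _ => by rw [Finset.mul_sum]
  have hQ : ∑ i, ∑ j, t^2*(θ i * θ j * β i j) = t^2 * ((B2 θ) θ) := by
    rw [clm2_expand B2 θ, Finset.mul_sum]
    refine Finset.sum_congr rfl fun i _ => ?_
    rw [Finset.mul_sum]
  have hQ' : ∑ i, ∑ j, t^2*(θ i * θ j * β j i) = t^2 * ((B2 θ) θ) := by
    rw [Finset.sum_comm]
    rw [← hQ]
    exact Finset.sum_congr rfl fun j _ => Finset.sum_congr rfl fun i _ => by ring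
  have hP : ∑ i, θ i * ψ i = φ θ := (clm_expand φ θ).symm
  have hsum1 : ∑ i, ∑ j, (t^2*(θ i^2 * β j j) + t^2*(β i i * θ j^2)
      - t^2*(θ i * θ j * β j i) - t^2*(θ i * θ j * β i j)
      - t*(θ i * ψ i) - t*(θ j * ψ j)) =
      t^2 * (1 * (∑ j, β j j)) + t^2 * ((∑ i, β i i) * 1)
        - t^2 * ((B2 θ) θ) - t^2 * ((B2 θ) θ)
        - (n:ℝ) * (t * (φ θ)) - (n:ℝ) * (t * (φ θ)) := by
    have expand : ∀ i : Fin n, ∑ j, (t^2*(θ i^2 * β j j) + t^2*(β i i * θ j^2)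
        - t^2*(θ i * θ j * β j i) - t^2*(θ i * θ j * β i j)
        - t*(θ i * ψ i) - t*(θ j * ψ j)) =
        (∑ j, t^2*(θ i^2 * β j j)) + (∑ j, t^2*(β i i * θ j^2))
        - (∑ j, t^2*(θ i * θ j * β j i)) - (∑ j, t^2*(θ i * θ j * β i j))
        - (∑ j : Fin n, t*(θ i * ψ i)) - (∑ j, t*(θ j * ψ j)) := by
      intro i
      rw [Finset.sum_sub_distrib, Finset.sum_sub_distrib, Finset.sum_sub_distrib,
        Finset.sum_sub_distrib, Finset.sum_add_distrib]
    rw [Finset.sum_congr rfl fun i _ => expand i]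
    rw [Finset.sum_sub_distrib, Finset.sum_sub_distrib, Finset.sum_sub_distrib,
      Finset.sum_sub_distrib, Finset.sum_add_distrib]
    rw [hQ, hQ']
    rw [hfact (t^2) (fun i => θ i^2) (fun j => β j j),
      hfact (t^2) (fun i => β i i) (fun j => θ j^2), hθ]
    have c1 : ∑ i : Fin n, ∑ _j : Fin n, t*(θ i * ψ i) = (n:ℝ) * (t * (φ θ)) := by
      rw [← hP]
      have : ∀ i : Fin n, ∑ _j : Fin n, t*(θ i * ψ i) = (n:ℝ) * (t * (θ i * ψ i)) := by
        intro i
        rw [Finset.sum_const, Finset.card_univ, Fintype.card_fin, nsmul_eq_mul]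
      rw [Finset.sum_congr rfl fun i _ => this i, ← Finset.mul_sum, ← Finset.mul_sum, hP]
    have c2 : ∑ _i : Fin n, ∑ j : Fin n, t*(θ j * ψ j) = (n:ℝ) * (t * (φ θ)) := by
      have hin : (∑ j, t*(θ j * ψ j)) = t * (φ θ) := by
        rw [← hP, Finset.mul_sum]
      rw [Finset.sum_congr rfl fun i _ => hin, Finset.sum_const, Finset.card_univ,
        Fintype.card_fin, nsmul_eq_mul]
    rw [c1, c2]
  have hdiag : ∑ i : Fin n, (t^2*(θ i^2 * β i i) + t^2*(β i i * θ i^2)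
      - t^2*(θ i * θ i * β i i) - t^2*(θ i * θ i * β i i)
      - t*(θ i * ψ i) - t*(θ i * ψ i)) = -2 * t * (φ θ) := by
    have : ∀ i : Fin n, (t^2*(θ i^2 * β i i) + t^2*(β i i * θ i^2)
        - t^2*(θ i * θ i * β i i) - t^2*(θ i * θ i * β i i)
        - t*(θ i * ψ i) - t*(θ i * ψ i)) = (-2*t) * (θ i * ψ i) := by
      intro i; ring
    rw [Finset.sum_congr rfl fun i _ => this i, ← Finset.mul_sum, hP]
  rw [Finset.sum_congr rfl fun p _ => hterm p.1 p.2, hsplit]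
  calc (∑ i, ∑ j, (t^2*(θ i^2 * β j j) + t^2*(β i i * θ j^2)
      - t^2*(θ i * θ j * β j i) - t^2*(θ i * θ j * β i j)
      - t*(θ i * ψ i) - t*(θ j * ψ j)))
      - ∑ i : Fin n, (t^2*(θ i^2 * β i i) + t^2*(β i i * θ i^2)
      - t^2*(θ i * θ i * β i i) - t^2*(θ i * θ i * β i i)
      - t*(θ i * ψ i) - t*(θ i * ψ i)) =
      (t^2 * (1 * (∑ j, β j j)) + t^2 * ((∑ i, β i i) * 1)
        - t^2 * ((B2 θ) θ) - t^2 * ((B2 θ) θ)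
        - (n:ℝ) * (t * (φ θ)) - (n:ℝ) * (t * (φ θ))) - (-2 * t * (φ θ)) := by
        rw [hsum1, hdiag]
    _ = 2 * t^2 * ((∑ i, (B2 (esingle i)) (esingle i)) - (B2 θ) θ)
        - 2*((n:ℝ)-1)*t* (φ θ) := by rw [hβ]; ring

/-- The Euclidean Laplacian: sum of second derivatives along the standard
orthonormal basis directions. -/
noncomputable def euclideanLaplacian {n : ℕ} (f : EuclideanSpace ℝ (Fin n) → ℝ)
    (x : EuclideanSpace ℝ (Fin n)) : ℝ :=
  ∑ i : Fin n, deriv (deriv (fun t : ℝ => f (x + t • EuclideanSpace.single i 1))) 0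

set_option maxHeartbeats 2000000 in
/-- The spherical means `G(x,t) = ∫_{S^{n-1}} f(x + tθ) dσ(θ)` of a `C²` function
`f : ℝⁿ → ℝ` satisfy the Euler–Poisson–Darboux equation
`G_tt + ((n-1)/t) G_t = Δ_x G` for `t > 0`. -/
theorem euler_poisson_darboux_equation
    (n : ℕ) (hn : 2 ≤ n)
    (f : EuclideanSpace ℝ (Fin n) → ℝ)
    (hf : ContDiff ℝ 2 f)
    (G : EuclideanSpace ℝ (Fin n) → ℝ → ℝ)
    (hG : ∀ x t, G x t =
      ∫ θ in sphere (0 : EuclideanSpace ℝ (Fin n)) 1, f (x + t • θ) ∂(μH[(n : ℝ) - 1])) :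
    ∀ x : EuclideanSpace ℝ (Fin n), ∀ t : ℝ, 0 < t →
      deriv (deriv (G x)) t + ((n - 1 : ℝ) / t) * deriv (G x) t =
        euclideanLaplacian (fun x' => G x' t) x := by
  obtain ⟨m, rfl⟩ : ∃ m, n = m + 1 := ⟨n - 1, by omega⟩
  intro x t ht
  haveI : IsFiniteMeasure (sphMeasure (m+1)) := sphMeasure_finite sphere_hausdorff_lt_top
  set σ : Measure (EuclideanSpace ℝ (Fin (m+1))) := sphMeasure (m+1) with hσ
  have hfd : Differentiable ℝ f := hf.differentiable (by norm_num)
  have hf1 : ContDiff ℝ 1 (fderiv ℝ f) := hf.fderiv_right (by norm_num)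
  have hf1d : Differentiable ℝ (fderiv ℝ f) := hf1.differentiable (by norm_num)
  have hfc : Continuous f := hf.continuous
  have hf1c : Continuous (fderiv ℝ f) := hf1.continuous
  have hf2c : Continuous (fderiv ℝ (fderiv ℝ f)) := hf1.continuous_fderiv (by norm_num)
  set f1 := fderiv ℝ f with hf1def
  set f2 := fderiv ℝ (fderiv ℝ f) with hf2def
  have hG' : ∀ (x' : EuclideanSpace ℝ (Fin (m+1))) (u : ℝ),
      G x' u = ∫ θ, f (x' + u • θ) ∂σ := fun x' u => hG x' u
  -- curve derivatives
  have hcurve : ∀ (c v : EuclideanSpace ℝ (Fin (m+1))) (u : ℝ),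
      HasDerivAt (fun u : ℝ => c + u • v) v u := by
    intro c v u
    simpa using ((hasDerivAt_id u).smul_const v).const_add c
  have hDf : ∀ (c v : EuclideanSpace ℝ (Fin (m+1))) (u : ℝ),
      HasDerivAt (fun u : ℝ => f (c + u • v)) ((f1 (c + u • v)) v) u := by
    intro c v u
    exact ((hfd _).hasFDerivAt.comp_hasDerivAt u (hcurve c v u) : _)
  have hDf1 : ∀ (c v w : EuclideanSpace ℝ (Fin (m+1))) (u : ℝ),
      HasDerivAt (fun u : ℝ => (f1 (c + u • v)) w) (((f2 (c + u • v)) v) w) u := by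
    intro c v w u
    have h1 : HasDerivAt (fun u : ℝ => f1 (c + u • v)) ((f2 (c + u • v)) v) u :=
      ((hf1d _).hasFDerivAt.comp_hasDerivAt u (hcurve c v u) : _)
    have h2 := h1.clm_apply (hasDerivAt_const u w)
    simpa using h2
  -- continuity of affine argument map
  have haff : ∀ x' : EuclideanSpace ℝ (Fin (m+1)),
      Continuous fun p : ℝ × EuclideanSpace ℝ (Fin (m+1)) => x' + p.1 • p.2 :=
    fun x' => continuous_const.add (continuous_fst.smul continuous_snd)
  -- first derivative of G in t
  have hD1 : ∀ (x' : EuclideanSpace ℝ (Fin (m+1))) (u : ℝ),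
      HasDerivAt (G x') (∫ θ, (f1 (x' + u • θ)) θ ∂σ) u := by
    intro x' u
    have hrw : G x' = fun u => ∫ θ, f (x' + u • θ) ∂σ := funext fun u => hG' x' u
    rw [hrw]
    exact hasDerivAt_integral_sph (fun s θ => f (x' + s • θ))
      (fun s θ => (f1 (x' + s • θ)) θ)
      (hfc.comp (haff x'))
      (((hf1c.comp (haff x')).clm_apply continuous_snd))
      (fun s θ => hDf x' θ s) u
  have hD1' : deriv (G x) = fun u => ∫ θ, (f1 (x + u • θ)) θ ∂σ :=
    funext fun u => (hD1 x u).deriv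
  have hD2 : HasDerivAt (fun u => ∫ θ, (f1 (x + u • θ)) θ ∂σ)
      (∫ θ, ((f2 (x + t • θ)) θ) θ ∂σ) t :=
    hasDerivAt_integral_sph (fun s θ => (f1 (x + s • θ)) θ)
      (fun s θ => ((f2 (x + s • θ)) θ) θ)
      ((hf1c.comp (haff x)).clm_apply continuous_snd)
      (((hf2c.comp (haff x)).clm_apply continuous_snd).clm_apply continuous_snd)
      (fun s θ => hDf1 x θ θ s) t
  have hLHS1 : deriv (deriv (G x)) t = ∫ θ, ((f2 (x + t • θ)) θ) θ ∂σ := by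
    rw [hD1']; exact hD2.deriv
  have hLHS2 : deriv (G x) t = ∫ θ, (f1 (x + t • θ)) θ ∂σ := (hD1 x t).deriv
  -- Laplacian side
  have haff2 : ∀ v : EuclideanSpace ℝ (Fin (m+1)),
      Continuous fun p : ℝ × EuclideanSpace ℝ (Fin (m+1)) => x + t • p.2 + p.1 • v :=
    fun v => by fun_prop
  have hLap : ∀ i : Fin (m+1),
      deriv (deriv (fun s : ℝ => G (x + s • EuclideanSpace.single i 1) t)) 0
        = ∫ θ, ((f2 (x + t • θ)) (esingle i)) (esingle i) ∂σ := by
    intro i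
    have hrw : (fun s : ℝ => G (x + s • EuclideanSpace.single i 1) t)
        = fun s => ∫ θ, f ((x + t • θ) + s • esingle i) ∂σ := by
      funext s
      rw [hG']
      congr 1
      funext θ
      congr 1
      show x + s • esingle i + t • θ = x + t • θ + s • esingle i
      abel
    rw [hrw]
    have hstep1 : ∀ s : ℝ, HasDerivAt (fun s => ∫ θ, f ((x + t • θ) + s • esingle i) ∂σ)
        (∫ θ, (f1 ((x + t • θ) + s • esingle i)) (esingle i) ∂σ) s := fun s =>
      hasDerivAt_integral_sph (fun s θ => f ((x + t • θ) + s • esingle i))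
        (fun s θ => (f1 ((x + t • θ) + s • esingle i)) (esingle i))
        (hfc.comp (haff2 (esingle i)))
        ((hf1c.comp (haff2 (esingle i))).clm_apply continuous_const)
        (fun s θ => hDf (x + t • θ) (esingle i) s) s
    have hd1 : deriv (fun s => ∫ θ, f ((x + t • θ) + s • esingle i) ∂σ)
        = fun s => ∫ θ, (f1 ((x + t • θ) + s • esingle i)) (esingle i) ∂σ :=
      funext fun s => (hstep1 s).deriv
    rw [hd1]
    have hstep2 : HasDerivAt
        (fun s : ℝ => ∫ θ, (f1 ((x + t • θ) + s • esingle i)) (esingle i) ∂σ)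
        (∫ θ, ((f2 ((x + t • θ) + (0:ℝ) • esingle i)) (esingle i)) (esingle i) ∂σ) (0:ℝ) :=
      hasDerivAt_integral_sph (fun s θ => (f1 ((x + t • θ) + s • esingle i)) (esingle i))
        (fun s θ => ((f2 ((x + t • θ) + s • esingle i)) (esingle i)) (esingle i))
        ((hf1c.comp (haff2 (esingle i))).clm_apply continuous_const)
        (((hf2c.comp (haff2 (esingle i))).clm_apply continuous_const).clm_apply
          continuous_const)
        (fun s θ => hDf1 (x + t • θ) (esingle i) (esingle i) s) 0
    rw [hstep2.deriv]
    congr 1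
    funext θ
    norm_num
  have hRHS : euclideanLaplacian (fun x' => G x' t) x
      = ∫ θ, ∑ i, ((f2 (x + t • θ)) (esingle i)) (esingle i) ∂σ := by
    rw [euclideanLaplacian]
    rw [Finset.sum_congr rfl fun i _ => hLap i]
    rw [← integral_finset_sum]
    intro i _
    exact integrable_sph _ (by fun_prop)
  -- rotation identities
  have hA : ∀ i j : Fin (m+1), Continuous fun θ : EuclideanSpace ℝ (Fin (m+1)) =>
      Avec i j θ := fun i j =>
    ((PiLp.continuous_apply 2 _ i).smul continuous_const).add ((PiLp.continuous_apply 2 _ j).smul continuous_const)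
  have hB : ∀ i j : Fin (m+1), Continuous fun θ : EuclideanSpace ℝ (Fin (m+1)) =>
      Bvec i j θ := fun i j =>
    ((PiLp.continuous_apply 2 _ i).smul continuous_const).sub ((PiLp.continuous_apply 2 _ j).smul continuous_const)
  have hrot : ∀ i j : Fin (m+1), i ≠ j →
      ∫ θ, (((f2 (x + t • θ)) (t • Bvec i j θ)) (t • Bvec i j θ)
        + (f1 (x + t • θ)) (-(t • Avec i j θ))) ∂σ = 0 := by
    intro i j hij
    have hdecomp : ∀ (s : ℝ) (θ : EuclideanSpace ℝ (Fin (m+1))),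
        rotFun i j s θ = θ + (cos s - 1) • Avec i j θ + sin s • Bvec i j θ := by
      intro s θ
      ext k
      rw [rotFun_apply]
      have expand : (θ + (cos s - 1) • Avec i j θ + sin s • Bvec i j θ) k =
          θ k + (cos s - 1) * (θ i * (if k = i then 1 else 0) + θ j * (if k = j then 1 else 0))
            + sin s * (θ i * (if k = j then 1 else 0) - θ j * (if k = i then 1 else 0)) := by
        simp [Avec, Bvec, esingle, PiLp.add_apply, PiLp.sub_apply, PiLp.smul_apply,
          EuclideanSpace.single_apply, smul_eq_mul, mul_comm]
        split_ifs <;> ring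
      rw [expand]
      split_ifs with h1 h2 h3
      · exact absurd (h1.symm.trans h2) hij
      · subst h1; ring
      · subst h3; ring
      · ring
    set γ : ℝ → EuclideanSpace ℝ (Fin (m+1)) → EuclideanSpace ℝ (Fin (m+1)) :=
      fun s θ => x + t • (θ + (cos s - 1) • Avec i j θ + sin s • Bvec i j θ) with hγ
    have hγd : ∀ (s : ℝ) θ, HasDerivAt (fun s => γ s θ)
        (t • ((-sin s) • Avec i j θ + cos s • Bvec i j θ)) s := by
      intro s θ
      have h1 : HasDerivAt (fun s : ℝ => (cos s - 1) • Avec i j θ) ((-sin s) • Avec i j θ) s :=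
        ((Real.hasDerivAt_cos s).sub_const 1).smul_const _
      have h2 : HasDerivAt (fun s : ℝ => sin s • Bvec i j θ) (cos s • Bvec i j θ) s :=
        (Real.hasDerivAt_sin s).smul_const _
      exact (((h1.const_add θ).add h2).const_smul t).const_add x
    have hγc : Continuous fun p : ℝ × EuclideanSpace ℝ (Fin (m+1)) => γ p.1 p.2 := by
      apply continuous_const.add
      apply Continuous.comp' (continuous_const_smul t)
      exact (continuous_snd.add
        (((Real.continuous_cos.comp continuous_fst).sub continuous_const).smul
          ((hA i j).comp continuous_snd))).add
        ((Real.continuous_sin.comp continuous_fst).smul ((hB i j).comp continuous_snd))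
    have hwc : Continuous fun p : ℝ × EuclideanSpace ℝ (Fin (m+1)) =>
        t • ((-sin p.1) • Avec i j p.2 + cos p.1 • Bvec i j p.2) := by
      apply Continuous.comp' (continuous_const_smul t)
      exact (((Real.continuous_sin.comp continuous_fst).neg).smul
        ((hA i j).comp continuous_snd)).add
        ((Real.continuous_cos.comp continuous_fst).smul ((hB i j).comp continuous_snd))
    have hwc' : Continuous fun p : ℝ × EuclideanSpace ℝ (Fin (m+1)) =>
        t • ((-cos p.1) • Avec i j p.2 + (-sin p.1) • Bvec i j p.2) := by
      apply Continuous.comp' (continuous_const_smul t)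
      exact (((Real.continuous_cos.comp continuous_fst).neg).smul
        ((hA i j).comp continuous_snd)).add
        (((Real.continuous_sin.comp continuous_fst).neg).smul ((hB i j).comp continuous_snd))
    have hF0d : ∀ (s : ℝ) θ, HasDerivAt (fun u => f (γ u θ))
        ((f1 (γ s θ)) (t • ((-sin s) • Avec i j θ + cos s • Bvec i j θ))) s := by
      intro s θ
      exact ((hfd _).hasFDerivAt.comp_hasDerivAt s (hγd s θ) : _)
    have hF1d : ∀ (s : ℝ) θ, HasDerivAt
        (fun u => (f1 (γ u θ)) (t • ((-sin u) • Avec i j θ + cos u • Bvec i j θ)))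
        (((f2 (γ s θ)) (t • ((-sin s) • Avec i j θ + cos s • Bvec i j θ)))
            (t • ((-sin s) • Avec i j θ + cos s • Bvec i j θ))
          + (f1 (γ s θ)) (t • ((-cos s) • Avec i j θ + (-sin s) • Bvec i j θ))) s := by
      intro s θ
      have hc : HasDerivAt (fun u => f1 (γ u θ))
          ((f2 (γ s θ)) (t • ((-sin s) • Avec i j θ + cos s • Bvec i j θ))) s :=
        ((hf1d _).hasFDerivAt.comp_hasDerivAt s (hγd s θ) : _)
      have hw : HasDerivAt
          (fun u : ℝ => t • ((-sin u) • Avec i j θ + cos u • Bvec i j θ))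
          (t • ((-cos s) • Avec i j θ + (-sin s) • Bvec i j θ)) s := by
        have ha : HasDerivAt (fun u : ℝ => (-sin u) • Avec i j θ)
            ((-cos s) • Avec i j θ) s := ((Real.hasDerivAt_sin s).neg).smul_const _
        have hb : HasDerivAt (fun u : ℝ => cos u • Bvec i j θ)
            ((-sin s) • Bvec i j θ) s := (Real.hasDerivAt_cos s).smul_const _
        exact (ha.add hb).const_smul t
      exact hc.clm_apply hw
    -- constancy
    have hk0 : ∀ s : ℝ, ∫ θ, f (γ s θ) ∂σ = ∫ θ, f (x + t • θ) ∂σ := by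
      intro s
      have hinv := integral_rotFun i j hij s (fun θ => f (x + t • θ))
        ((hfc.comp (continuous_const.add (continuous_const_smul t))).aestronglyMeasurable)
      rw [← hinv]
      congr 1
      funext θ
      rw [hγ]
      congr 1
      rw [hdecomp]
    have hd1 : ∀ s : ℝ, HasDerivAt (fun s => ∫ θ, f (γ s θ) ∂σ)
        (∫ θ, (f1 (γ s θ)) (t • ((-sin s) • Avec i j θ + cos s • Bvec i j θ)) ∂σ) s :=
      fun s => hasDerivAt_integral_sph
        (fun s θ => f (γ s θ))
        (fun s θ => (f1 (γ s θ)) (t • ((-sin s) • Avec i j θ + cos s • Bvec i j θ)))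
        (hfc.comp hγc) ((hf1c.comp hγc).clm_apply hwc) hF0d s
    have hzero1 : ∀ s : ℝ,
        ∫ θ, (f1 (γ s θ)) (t • ((-sin s) • Avec i j θ + cos s • Bvec i j θ)) ∂σ = 0 := by
      intro s
      have hconst : (fun s : ℝ => ∫ θ, f (γ s θ) ∂σ) = fun _ => ∫ θ, f (x + t • θ) ∂σ :=
        funext hk0
      have hthis := hd1 s
      rw [hconst] at hthis
      exact (hthis.unique (hasDerivAt_const _ _))
    have hd2 : HasDerivAt
        (fun s : ℝ => ∫ θ, (f1 (γ s θ)) (t • ((-sin s) • Avec i j θ + cos s • Bvec i j θ)) ∂σ)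
        (∫ θ, (((f2 (γ 0 θ)) (t • ((-sin 0) • Avec i j θ + cos 0 • Bvec i j θ)))
            (t • ((-sin 0) • Avec i j θ + cos 0 • Bvec i j θ))
          + (f1 (γ 0 θ)) (t • ((-cos 0) • Avec i j θ + (-sin 0) • Bvec i j θ))) ∂σ) (0:ℝ) :=
      hasDerivAt_integral_sph _ _
        ((hf1c.comp hγc).clm_apply hwc)
        ((((hf2c.comp hγc).clm_apply hwc).clm_apply hwc).add
          ((hf1c.comp hγc).clm_apply hwc'))
        hF1d 0
    have hzero2 : ∫ θ, (((f2 (γ 0 θ)) (t • ((-sin 0) • Avec i j θ + cos 0 • Bvec i j θ)))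
            (t • ((-sin 0) • Avec i j θ + cos 0 • Bvec i j θ))
          + (f1 (γ 0 θ)) (t • ((-cos 0) • Avec i j θ + (-sin 0) • Bvec i j θ))) ∂σ = 0 := by
      have hconst : (fun s : ℝ =>
          ∫ θ, (f1 (γ s θ)) (t • ((-sin s) • Avec i j θ + cos s • Bvec i j θ)) ∂σ)
          = fun _ => (0:ℝ) := funext hzero1
      rw [hconst] at hd2
      exact (hd2.unique (hasDerivAt_const _ _))
    rw [← hzero2]
    congr 1
    funext θ
    have hγ0 : γ 0 θ = x + t • θ := by
      rw [hγ]; norm_num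
    have hw0 : t • ((-sin 0) • Avec i j θ + cos 0 • Bvec i j θ) = t • Bvec i j θ := by
      norm_num
    have hw0' : t • ((-cos 0) • Avec i j θ + (-sin 0) • Bvec i j θ) = -(t • Avec i j θ) := by
      norm_num
    rw [hγ0, hw0, hw0']
  -- sum rotation identities
  have hcontB : ∀ p : Fin (m+1) × Fin (m+1), Continuous fun θ :
      EuclideanSpace ℝ (Fin (m+1)) =>
      (((f2 (x + t • θ)) (t • Bvec p.1 p.2 θ)) (t • Bvec p.1 p.2 θ)
        + (f1 (x + t • θ)) (-(t • Avec p.1 p.2 θ))) := by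
    intro p
    have haffθ : Continuous fun θ : EuclideanSpace ℝ (Fin (m+1)) => x + t • θ :=
      continuous_const.add (continuous_const_smul t)
    exact (((hf2c.comp haffθ).clm_apply ((hB p.1 p.2).const_smul t)).clm_apply
      ((hB p.1 p.2).const_smul t)).add
      ((hf1c.comp haffθ).clm_apply ((hA p.1 p.2).const_smul t).neg)
  have hsum0 : ∫ θ, (∑ p ∈ (Finset.univ : Finset (Fin (m+1))).offDiag,
      (((f2 (x + t • θ)) (t • Bvec p.1 p.2 θ)) (t • Bvec p.1 p.2 θ)
        + (f1 (x + t • θ)) (-(t • Avec p.1 p.2 θ)))) ∂σ = 0 := by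
    rw [integral_finset_sum _ (fun p _ => integrable_sph _ (hcontB p))]
    rw [Finset.sum_congr rfl fun p hp => hrot p.1 p.2 (Finset.mem_offDiag.1 hp).2.2]
    exact Finset.sum_const_zero
  -- pointwise identity a.e.
  have hae : (fun θ => ∑ p ∈ (Finset.univ : Finset (Fin (m+1))).offDiag,
      (((f2 (x + t • θ)) (t • Bvec p.1 p.2 θ)) (t • Bvec p.1 p.2 θ)
        + (f1 (x + t • θ)) (-(t • Avec p.1 p.2 θ))))
      =ᵐ[σ] fun θ => 2 * t^2 * ((∑ i, ((f2 (x + t • θ)) (esingle i)) (esingle i))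
          - ((f2 (x + t • θ)) θ) θ)
        - 2*(((m+1:ℕ):ℝ)-1)*t* ((f1 (x + t • θ)) θ) := by
    filter_upwards [sphMeasure_ae_norm (m+1)] with θ hθ
    apply offDiag_identity t (f2 (x + t • θ)) (f1 (x + t • θ)) θ
    have h := EuclideanSpace.norm_eq θ
    rw [hθ] at h
    have hnn : (0:ℝ) ≤ ∑ i, ‖θ i‖ ^ 2 := Finset.sum_nonneg fun i _ => by positivity
    have h3 : (∑ i, ‖θ i‖ ^ 2) = 1 := by
      nlinarith [Real.sq_sqrt hnn, Real.sqrt_nonneg (∑ i, ‖θ i‖ ^ 2)]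
    simpa [Real.norm_eq_abs, sq_abs] using h3
  have hkey : ∫ θ, (2 * t^2 * ((∑ i, ((f2 (x + t • θ)) (esingle i)) (esingle i))
          - ((f2 (x + t • θ)) θ) θ)
        - 2*(((m+1:ℕ):ℝ)-1)*t* ((f1 (x + t • θ)) θ)) ∂σ = 0 := by
    exact ((integral_congr_ae hae).symm).trans hsum0
  -- integrability of the pieces
  have haffθ : Continuous fun θ : EuclideanSpace ℝ (Fin (m+1)) => x + t • θ :=
    continuous_const.add (continuous_const_smul t)
  have hint1 : Integrable (fun θ => ((f2 (x + t • θ)) θ) θ) σ :=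
    integrable_sph _ (((hf2c.comp haffθ).clm_apply continuous_id).clm_apply continuous_id)
  have hint2 : Integrable (fun θ => (f1 (x + t • θ)) θ) σ :=
    integrable_sph _ ((hf1c.comp haffθ).clm_apply continuous_id)
  have hint3 : Integrable (fun θ => ∑ i, ((f2 (x + t • θ)) (esingle i)) (esingle i)) σ := by
    apply integrable_finset_sum
    intro i _
    exact integrable_sph _ (((hf2c.comp haffθ).clm_apply continuous_const).clm_apply
      continuous_const)
  -- expand hkey by linearity
  have hexp : ∫ θ, (2 * t^2 * ((∑ i, ((f2 (x + t • θ)) (esingle i)) (esingle i))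
          - ((f2 (x + t • θ)) θ) θ)
        - 2*(((m+1:ℕ):ℝ)-1)*t* ((f1 (x + t • θ)) θ)) ∂σ
      = 2 * t^2 * ((∫ θ, ∑ i, ((f2 (x + t • θ)) (esingle i)) (esingle i) ∂σ)
          - ∫ θ, ((f2 (x + t • θ)) θ) θ ∂σ)
        - 2*(((m+1:ℕ):ℝ)-1)*t* ∫ θ, (f1 (x + t • θ)) θ ∂σ := by
    rw [integral_sub
        (f := fun θ => 2 * t^2 * ((∑ i, ((f2 (x + t • θ)) (esingle i)) (esingle i))
          - ((f2 (x + t • θ)) θ) θ))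
        (g := fun θ => 2*(((m+1:ℕ):ℝ)-1)*t* ((f1 (x + t • θ)) θ))
        (((hint3.sub hint1).const_mul _)) (hint2.const_mul _),
      integral_const_mul, integral_const_mul,
      integral_sub (f := fun θ => ∑ i, ((f2 (x + t • θ)) (esingle i)) (esingle i))
        (g := fun θ => ((f2 (x + t • θ)) θ) θ) hint3 hint1]
  rw [hexp] at hkey
  -- final algebra
  rw [hLHS1, hLHS2, hRHS]
  set IT := ∫ θ, ∑ i, ((f2 (x + t • θ)) (esingle i)) (esingle i) ∂σ
  set IB := ∫ θ, ((f2 (x + t • θ)) θ) θ ∂σ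
  set IP := ∫ θ, (f1 (x + t • θ)) θ ∂σ
  have ht' : t ≠ 0 := ne_of_gt ht
  have hk2 : IT - IB = (((m+1:ℕ):ℝ)-1)/t * IP := by
    have he : 2*t^2*((((m+1:ℕ):ℝ)-1)/t*IP) = 2*(((m+1:ℕ):ℝ)-1)*t*IP := by
      field_simp
    have he2 : 2*t^2*(IT - IB) = 2*t^2*((((m+1:ℕ):ℝ)-1)/t*IP) := by
      rw [he]; linarith [hkey]
    have h2t : (2*t^2) ≠ 0 := by positivity
    exact mul_left_cancel₀ h2t he2
  linarith [hk2]
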